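/- The Jordan algebra M₂(F)^(+) decomposes as a direct sum of vector spaces M₂(F)^(+) = H₂(F) ⊕ F·e₁₂, where H₂(F) = span(e₁₁, e₂₂, e₁₂+e₂₁), and both summands are subalgebras of M₂(F)^(+). Consequently, the operator S defined by S = 0 on H₂(F) and S(e₁₂) = −e₁₂ is a Rota–Baxter operator of weight 1 on M₂(F)^(+). -/

import Mathlib

def E (F : Type*) [Field F] (i j : Fin 2) : Matrix (Fin 2) (Fin 2) F :=
  Matrix.single i j 1

/-- The Jordan product on `M₂(F)`. -/
def jmul {F : Type*} [Field F] (a b : Matrix (Fin 2) (Fin 2) F) : Matrix (Fin 2) (Fin 2) F :=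
  (2 : F)⁻¹ • (a * b + b * a)

lemma memH_iff {F : Type*} [Field F] (m : Matrix (Fin 2) (Fin 2) F) :
    m ∈ Submodule.span F {E F 0 0, E F 1 1, E F 0 1 + E F 1 0} ↔ m 0 1 = m 1 0 := by
  constructor
  · intro hm
    induction hm using Submodule.span_induction with
    | mem x hx =>
      rcases hx with h | h | h <;> subst h <;>
        simp [E, Matrix.single, Matrix.add_apply]
    | zero => simp
    | add x y _ _ hx hy => simp [Matrix.add_apply, hx, hy]
    | smul c x _ hx => simp [Matrix.smul_apply, hx]
  · intro hm
    have : m = m 0 0 • E F 0 0 + m 1 1 • E F 1 1 + m 1 0 • (E F 0 1 + E F 1 0) := by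
      ext i j
      fin_cases i <;> fin_cases j <;>
        simp [E, Matrix.single, Matrix.add_apply, Matrix.smul_apply, hm]
    rw [this]
    refine Submodule.add_mem _ (Submodule.add_mem _ ?_ ?_) ?_ <;>
      exact Submodule.smul_mem _ _ (Submodule.subset_span (by simp))

theorem splitting_decomposition_H2 {F : Type*} [Field F] (h2 : (2 : F) ≠ 0)
    (H : Submodule F (Matrix (Fin 2) (Fin 2) F))
    (hH : H = Submodule.span F {E F 0 0, E F 1 1, E F 0 1 + E F 1 0})
    (B : Submodule F (Matrix (Fin 2) (Fin 2) F))
    (hB : B = Submodule.span F {E F 0 1})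
    (S : Matrix (Fin 2) (Fin 2) F →ₗ[F] Matrix (Fin 2) (Fin 2) F)
    (hS0 : ∀ a ∈ H, S a = 0) (hS1 : S (E F 0 1) = -E F 0 1) :
    H ⊔ B = ⊤ ∧ H ⊓ B = ⊥ ∧
    (∀ a ∈ H, ∀ b ∈ H, jmul a b ∈ H) ∧ (∀ a ∈ B, ∀ b ∈ B, jmul a b ∈ B) ∧
    (∀ x y : Matrix (Fin 2) (Fin 2) F,
      jmul (S x) (S y) = S (jmul (S x) y + jmul x (S y) + jmul x y)) := by
  have memH : ∀ m : Matrix (Fin 2) (Fin 2) F, m ∈ H ↔ m 0 1 = m 1 0 := by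
    intro m; rw [hH]; exact memH_iff m
  have hdec : ∀ x : Matrix (Fin 2) (Fin 2) F,
      x = (x - (x 0 1 - x 1 0) • E F 0 1) + (x 0 1 - x 1 0) • E F 0 1 := by
    intro x; simp
  have hpart : ∀ x : Matrix (Fin 2) (Fin 2) F, (x - (x 0 1 - x 1 0) • E F 0 1) ∈ H := by
    intro x
    rw [memH]
    simp [E, Matrix.single, Matrix.sub_apply, Matrix.smul_apply]
  have hSx : ∀ x : Matrix (Fin 2) (Fin 2) F, S x = (x 1 0 - x 0 1) • E F 0 1 := by
    intro x
    conv_lhs => rw [hdec x]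
    rw [map_add, hS0 _ (hpart x), map_smul, hS1]
    ext i j
    simp [Matrix.smul_apply, Matrix.neg_apply]
    ring
  refine ⟨?_, ?_, ?_, ?_, ?_⟩
  · rw [eq_top_iff]
    intro x _
    rw [hdec x]
    exact Submodule.add_mem _ (Submodule.mem_sup_left (hpart x))
      (Submodule.mem_sup_right (hB ▸ Submodule.smul_mem _ _
        (Submodule.subset_span rfl)))
  · rw [eq_bot_iff]
    intro m hm
    rw [Submodule.mem_inf] at hm
    obtain ⟨hmH, hmB⟩ := hm
    rw [hB, Submodule.mem_span_singleton] at hmB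
    obtain ⟨c, rfl⟩ := hmB
    rw [memH] at hmH
    simp [E, Matrix.single, Matrix.smul_apply] at hmH
    simp [hmH]
  · intro a ha b hb
    rw [memH] at ha hb ⊢
    simp only [jmul, Matrix.smul_apply, Matrix.add_apply, Matrix.mul_apply,
      Fin.sum_univ_two]
    rw [ha, hb]
    ring
  · intro a ha b hb
    rw [hB, Submodule.mem_span_singleton] at ha hb
    obtain ⟨c, rfl⟩ := ha
    obtain ⟨d, rfl⟩ := hb
    have : jmul (c • E F 0 1) (d • E F 0 1) = 0 := by
      ext i j
      fin_cases i <;> fin_cases j <;>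
        simp [jmul, E, Matrix.single, Matrix.smul_apply, Matrix.add_apply,
          Matrix.mul_apply, Fin.sum_univ_two]
    rw [this]
    exact Submodule.zero_mem _
  · intro x y
    rw [hSx x, hSx y, hSx]
    ext i j
    fin_cases i <;> fin_cases j <;>
      simp [jmul, E, Matrix.single, Matrix.smul_apply, Matrix.add_apply,
        Matrix.mul_apply, Fin.sum_univ_two] <;> ring
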